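/- Let φ ∈ C²(Ω) be a positive superharmonic function on an open set Ω ⊂ ℝᵈ (i.e. Δφ ≤ 0 on Ω) and let η ∈ C²(Ω). Then pointwise on Ω one has Δ(η²/φ)·Δφ ≤ (Δη)². -/

import Mathlib

open MeasureTheory

noncomputable def lap {d : ℕ} (f : EuclideanSpace ℝ (Fin d) → ℝ)
    (x : EuclideanSpace ℝ (Fin d)) : ℝ :=
  ∑ i : Fin d, fderiv ℝ (fun y => fderiv ℝ f y (EuclideanSpace.single i 1)) x
    (EuclideanSpace.single i 1)

lemma aux_second_deriv {d : ℕ} {Ω : Set (EuclideanSpace ℝ (Fin d))} (hΩ : IsOpen Ω)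
    {φ η : EuclideanSpace ℝ (Fin d) → ℝ}
    (hφ : ContDiffOn ℝ 2 φ Ω) (hη : ContDiffOn ℝ 2 η Ω)
    (hφpos : ∀ x ∈ Ω, 0 < φ x) {x : EuclideanSpace ℝ (Fin d)} (hx : x ∈ Ω)
    (v : EuclideanSpace ℝ (Fin d)) :
    fderiv ℝ (fun y => fderiv ℝ (fun z => (η z) ^ 2 / φ z) y v) x v
      = 2 * η x * (fderiv ℝ (fun y => fderiv ℝ η y v) x v) / φ x
        - (η x) ^ 2 * (fderiv ℝ (fun y => fderiv ℝ φ y v) x v) / (φ x) ^ 2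
        + (2 / φ x) * (fderiv ℝ η x v - η x * fderiv ℝ φ x v / φ x) ^ 2 := by
  have hmem : Ω ∈ nhds x := hΩ.mem_nhds hx
  have hηd : ∀ y ∈ Ω, HasFDerivAt η (fderiv ℝ η y) y := fun y hy =>
    ((hη.contDiffAt (hΩ.mem_nhds hy)).differentiableAt (by norm_num)).hasFDerivAt
  have hφd : ∀ y ∈ Ω, HasFDerivAt φ (fderiv ℝ φ y) y := fun y hy =>
    ((hφ.contDiffAt (hΩ.mem_nhds hy)).differentiableAt (by norm_num)).hasFDerivAt
  have step1 : ∀ y ∈ Ω, fderiv ℝ (fun z => (η z) ^ 2 / φ z) y v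
      = 2 * η y * (fderiv ℝ η y v) * (φ y)⁻¹
        - (η y * η y) * (fderiv ℝ φ y v) * ((φ y * φ y))⁻¹ := by
    intro y hy
    have h1 := hηd y hy
    have h2 := hφd y hy
    have hne : φ y ≠ 0 := (hφpos y hy).ne'
    have hinv : HasFDerivAt (fun z => (φ z)⁻¹) ((-((φ y) ^ 2)⁻¹) • fderiv ℝ φ y) y :=
      (hasDerivAt_inv hne).comp_hasFDerivAt y h2
    have hfun : (fun z => (η z) ^ 2 / φ z) = fun z => (η z * η z) * (φ z)⁻¹ := by
      funext z; rw [pow_two, div_eq_mul_inv]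
    have hu := (h1.mul h1).mul hinv
    have hu' : HasFDerivAt (fun z => η z * η z * (φ z)⁻¹) _ y := hu
    rw [hfun, hu'.fderiv]
    simp only [ContinuousLinearMap.add_apply, ContinuousLinearMap.smul_apply, smul_eq_mul, Pi.mul_apply]
    field_simp
    ring
  have heq : (fun y => fderiv ℝ (fun z => (η z) ^ 2 / φ z) y v)
      =ᶠ[nhds x] (fun y => 2 * η y * (fderiv ℝ η y v) * (φ y)⁻¹
        - (η y * η y) * (fderiv ℝ φ y v) * ((φ y * φ y))⁻¹) :=
    Filter.eventuallyEq_of_mem hmem step1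
  rw [heq.fderiv_eq]
  have hne : φ x ≠ 0 := (hφpos x hx).ne'
  have hne2 : φ x * φ x ≠ 0 := mul_ne_zero hne hne
  have Hη := hηd x hx
  have Hφ := hφd x hx
  have hDη : DifferentiableAt ℝ (fun y => fderiv ℝ η y v) x := by
    have h1 : ContDiffAt ℝ 1 (fderiv ℝ η) x :=
      (hη.contDiffAt hmem).fderiv_right (by norm_num)
    exact (h1.differentiableAt one_ne_zero).clm_apply (differentiableAt_const v)
  have hDφ : DifferentiableAt ℝ (fun y => fderiv ℝ φ y v) x := by
    have h1 : ContDiffAt ℝ 1 (fderiv ℝ φ) x :=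
      (hφ.contDiffAt hmem).fderiv_right (by norm_num)
    exact (h1.differentiableAt one_ne_zero).clm_apply (differentiableAt_const v)
  have HDη : HasFDerivAt (fun y => fderiv ℝ η y v)
      (fderiv ℝ (fun y => fderiv ℝ η y v) x) x := hDη.hasFDerivAt
  have HDφ : HasFDerivAt (fun y => fderiv ℝ φ y v)
      (fderiv ℝ (fun y => fderiv ℝ φ y v) x) x := hDφ.hasFDerivAt
  have hinv1 : HasFDerivAt (fun z => (φ z)⁻¹) ((-((φ x) ^ 2)⁻¹) • fderiv ℝ φ x) x :=
    (hasDerivAt_inv hne).comp_hasFDerivAt x Hφ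
  have hinv2 : HasFDerivAt (fun z => (φ z * φ z)⁻¹)
      ((-((φ x * φ x) ^ 2)⁻¹) • (φ x • fderiv ℝ φ x + φ x • fderiv ℝ φ x)) x :=
    (hasDerivAt_inv hne2).comp_hasFDerivAt x (Hφ.mul Hφ)
  have Hg := ((((Hη.const_mul 2)).mul HDη).mul hinv1).sub (((Hη.mul Hη).mul HDφ).mul hinv2)
  have Hg' : HasFDerivAt (fun y => 2 * η y * fderiv ℝ η y v * (φ y)⁻¹
      - η y * η y * fderiv ℝ φ y v * (φ y * φ y)⁻¹) _ x := Hg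
  rw [Hg'.fderiv]
  simp only [ContinuousLinearMap.add_apply, ContinuousLinearMap.sub_apply,
    ContinuousLinearMap.smul_apply, smul_eq_mul, Pi.mul_apply, Pi.sub_apply]
  field_simp
  ring

theorem stmt_0 {d : ℕ} (Ω : Set (EuclideanSpace ℝ (Fin d))) (hΩ : IsOpen Ω)
    (φ η : EuclideanSpace ℝ (Fin d) → ℝ)
    (hφ : ContDiffOn ℝ 2 φ Ω) (hη : ContDiffOn ℝ 2 η Ω)
    (hφpos : ∀ x ∈ Ω, 0 < φ x) (hsuper : ∀ x ∈ Ω, lap φ x ≤ 0) :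
    ∀ x ∈ Ω, lap (fun y => (η y) ^ 2 / φ y) x * lap φ x ≤ (lap η x) ^ 2 := by
  intro x hx
  have hp : 0 < φ x := hφpos x hx
  have hM : lap φ x ≤ 0 := hsuper x hx
  set p := φ x with hp_def
  set e := η x with he_def
  set L := lap η x with hL_def
  set M := lap φ x with hM_def
  set S : ℝ := ∑ i : Fin d,
      (fderiv ℝ η x (EuclideanSpace.single i 1)
        - e * fderiv ℝ φ x (EuclideanSpace.single i 1) / p) ^ 2 with hS_def
  have hS : 0 ≤ S := Finset.sum_nonneg fun i _ => sq_nonneg _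
  have hsum : lap (fun y => (η y) ^ 2 / φ y) x = 2 * e * L / p - e ^ 2 * M / p ^ 2 + (2 / p) * S := by
    rw [hL_def, hM_def, hS_def, lap, lap, lap]
    rw [Finset.sum_congr rfl fun i _ =>
      aux_second_deriv hΩ hφ hη hφpos hx (EuclideanSpace.single i 1)]
    rw [Finset.sum_add_distrib, Finset.sum_sub_distrib, Finset.mul_sum,
      ← Finset.sum_div, ← Finset.sum_div, ← Finset.mul_sum, ← Finset.mul_sum, ← Finset.mul_sum]
  rw [hsum]
  have hp2 : (0:ℝ) < p ^ 2 := pow_pos hp 2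
  have expand : (2 * e * L / p - e ^ 2 * M / p ^ 2 + (2 / p) * S) * M * p ^ 2
      = (2 * e * L * p - e ^ 2 * M + 2 * S * p) * M := by
    field_simp
  have h2 : (2 * e * L * p - e ^ 2 * M + 2 * S * p) * M ≤ L ^ 2 * p ^ 2 := by
    nlinarith [sq_nonneg (L * p - e * M), mul_nonneg (mul_nonneg hS hp.le) (neg_nonneg.2 hM)]
  nlinarith [expand, h2, hp2]
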